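/- For every n ≥ 2, the root system of type B_n, realized as {±e_i : 1 ≤ i ≤ n} ∪ {±e_i ± e_j : 1 ≤ i < j ≤ n} ⊆ ℤ^n, admits no partition into m ≥ 3 nonempty parts Δ_1, …, Δ_m such that each Δ_i and each Δ_i ⊔ Δ_j is closed. -/
import Mathlib


/-- Standard basis vector `e i` in `ℤ^n`. -/
def eb {n : ℕ} (i : Fin n) : Fin n → ℤ := fun k => if k = i then 1 else 0

/-- A subset `S` of a root system `Δ` is closed if `α, β ∈ S` and `α + β ∈ Δ`
imply `α + β ∈ S`. -/
def RootClosed {n : ℕ} (Δ S : Set (Fin n → ℤ)) : Prop :=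
  ∀ a ∈ S, ∀ b ∈ S, a + b ∈ Δ → a + b ∈ S

/-- The root system of type `B_n`: short roots `±e_i` and long roots `±e_i ± e_j`
for `i < j`. -/
def rootsB (n : ℕ) : Set (Fin n → ℤ) :=
  {v | (∃ i, v = eb i ∨ v = -eb i) ∨
       (∃ i j, i < j ∧ (v = eb i + eb j ∨ v = eb i - eb j ∨
                        v = -eb i + eb j ∨ v = -eb i - eb j))}

section Aux

variable {n m : ℕ}

lemma mem_eb (i : Fin n) : eb i ∈ rootsB n := Or.inl ⟨i, Or.inl rfl⟩
lemma mem_neg_eb (i : Fin n) : -eb i ∈ rootsB n := Or.inl ⟨i, Or.inr rfl⟩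

lemma mem_pp {i j : Fin n} (h : i ≠ j) : eb i + eb j ∈ rootsB n := by
  rcases lt_or_gt_of_ne h with hlt | hgt
  · exact Or.inr ⟨i, j, hlt, Or.inl rfl⟩
  · exact Or.inr ⟨j, i, hgt, Or.inl (add_comm _ _)⟩

lemma mem_pm {i j : Fin n} (h : i ≠ j) : eb i - eb j ∈ rootsB n := by
  rcases lt_or_gt_of_ne h with hlt | hgt
  · exact Or.inr ⟨i, j, hlt, Or.inr (Or.inl rfl)⟩
  · exact Or.inr ⟨j, i, hgt, Or.inr (Or.inr (Or.inl (by abel)))⟩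

lemma mem_mp {i j : Fin n} (h : i ≠ j) : -eb i + eb j ∈ rootsB n := by
  rcases lt_or_gt_of_ne h with hlt | hgt
  · exact Or.inr ⟨i, j, hlt, Or.inr (Or.inr (Or.inl rfl))⟩
  · exact Or.inr ⟨j, i, hgt, Or.inr (Or.inl (by abel))⟩

lemma mem_mm {i j : Fin n} (h : i ≠ j) : -eb i - eb j ∈ rootsB n := by
  rcases lt_or_gt_of_ne h with hlt | hgt
  · exact Or.inr ⟨i, j, hlt, Or.inr (Or.inr (Or.inr rfl))⟩
  · exact Or.inr ⟨j, i, hgt, Or.inr (Or.inr (Or.inr (by abel)))⟩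

/-- Purely propositional core of the `B₂` analysis. -/
lemma abstractB2 {α : Type*} {X X' Y Y' Cp Cq Cr Cw : α}
    (h1 : Cp = X ∨ Cp = Y) (_h2 : Cq = X ∨ Cq = Y')
    (_h3 : Cr = X' ∨ Cr = Y) (_h4 : Cw = X' ∨ Cw = Y')
    (h5 : Y = X ∨ Y = Cr) (h6 : Y' = X ∨ Y' = Cw)
    (h7 : Y = X' ∨ Y = Cp) (h8 : Y' = X' ∨ Y' = Cq)
    (h9 : X = Y ∨ X = Cq) (h10 : X' = Y ∨ X' = Cw)
    (h11 : X = Y' ∨ X = Cp) (h12 : X' = Y' ∨ X' = Cr) :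
    (X ≠ X' → (Y = X ∨ Y = X') ∧ (Y' = X ∨ Y' = X')) ∧
    (X = X' → Y = Y' → X = Y) := by
  constructor
  · intro hX
    constructor
    · by_contra hY
      push_neg at hY
      obtain ⟨hY1, hY2⟩ := hY
      have hcr : Y = Cr := h5.resolve_left hY1
      have hcp : Y = Cp := h7.resolve_left hY2
      have hcq : X = Cq := h9.resolve_left (fun h => hY1 h.symm)
      have hcw : X' = Cw := h10.resolve_left (fun h => hY2 h.symm)
      have hXY' : X = Y' := by
        rcases h11 with h | h
        · exact h
        · exact absurd (h.trans hcp.symm) (fun hh => hY1 hh.symm)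
      rcases h12 with h | h
      · exact hX (hXY'.trans h.symm)
      · exact hY2 (h.trans hcr.symm).symm
    · by_contra hY
      push_neg at hY
      obtain ⟨hY1, hY2⟩ := hY
      have hcw : Y' = Cw := h6.resolve_left hY1
      have hcq : Y' = Cq := h8.resolve_left hY2
      have hcp : X = Cp := by
        rcases h11 with h | h
        · exact absurd h (fun hh => hY1 hh.symm)
        · exact h
      have hcr : X' = Cr := by
        rcases h12 with h | h
        · exact absurd h (fun hh => hY2 hh.symm)
        · exact h
      have hXY : X = Y := by
        rcases h9 with h | h
        · exact h
        · exact absurd (h.trans hcq.symm) (fun hh => hY1 hh.symm)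
      rcases h10 with h | h
      · exact hX (hXY.trans h.symm)
      · exact hY2 (h.trans hcw.symm).symm
  · intro hXX hYY
    by_contra hXY
    rcases h1 with h | h
    · rcases h7 with h' | h'
      · exact hXY (hXX.trans h'.symm)
      · exact hXY (h'.trans h).symm
    · rcases h11 with h' | h'
      · exact hXY (h'.trans hYY.symm)
      · exact hXY (h'.trans h)

variable (c : (Fin n → ℤ) → Fin m)

lemma step (key : ∀ a ∈ rootsB n, ∀ b ∈ rootsB n,
      a + b ∈ rootsB n → c (a + b) = c a ∨ c (a + b) = c b)
    {a b s : Fin n → ℤ} (ha : a ∈ rootsB n) (hb : b ∈ rootsB n)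
    (hs : s ∈ rootsB n) (e : a + b = s) : c s = c a ∨ c s = c b := by
  subst e; exact key a ha b hb hs

/-- The two key facts from the `B₂` subsystem on coordinates `i ≠ j`. -/
lemma pair_facts (key : ∀ a ∈ rootsB n, ∀ b ∈ rootsB n,
      a + b ∈ rootsB n → c (a + b) = c a ∨ c (a + b) = c b)
    {i j : Fin n} (hij : i ≠ j) :
    (c (eb i) ≠ c (-eb i) →
      (c (eb j) = c (eb i) ∨ c (eb j) = c (-eb i)) ∧
      (c (-eb j) = c (eb i) ∨ c (-eb j) = c (-eb i))) ∧
    (c (eb i) = c (-eb i) → c (eb j) = c (-eb j) → c (eb i) = c (eb j)) := by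
  have hji : j ≠ i := hij.symm
  have h1 : c (eb i + eb j) = c (eb i) ∨ c (eb i + eb j) = c (eb j) :=
    step c key (mem_eb i) (mem_eb j) (mem_pp hij) rfl
  have h2 : c (eb i - eb j) = c (eb i) ∨ c (eb i - eb j) = c (-eb j) :=
    step c key (mem_eb i) (mem_neg_eb j) (mem_pm hij) (by abel)
  have h3 : c (-eb i + eb j) = c (-eb i) ∨ c (-eb i + eb j) = c (eb j) :=
    step c key (mem_neg_eb i) (mem_eb j) (mem_mp hij) rfl
  have h4 : c (-eb i - eb j) = c (-eb i) ∨ c (-eb i - eb j) = c (-eb j) :=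
    step c key (mem_neg_eb i) (mem_neg_eb j) (mem_mm hij) (by abel)
  have h5 : c (eb j) = c (eb i) ∨ c (eb j) = c (-eb i + eb j) :=
    step c key (mem_eb i) (mem_mp hij) (mem_eb j) (by abel)
  have h6 : c (-eb j) = c (eb i) ∨ c (-eb j) = c (-eb i - eb j) :=
    step c key (mem_eb i) (mem_mm hij) (mem_neg_eb j) (by abel)
  have h7 : c (eb j) = c (-eb i) ∨ c (eb j) = c (eb i + eb j) :=
    step c key (mem_neg_eb i) (mem_pp hij) (mem_eb j) (by abel)
  have h8 : c (-eb j) = c (-eb i) ∨ c (-eb j) = c (eb i - eb j) :=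
    step c key (mem_neg_eb i) (mem_pm hij) (mem_neg_eb j) (by abel)
  have h9 : c (eb i) = c (eb j) ∨ c (eb i) = c (eb i - eb j) :=
    step c key (mem_eb j) (mem_pm hij) (mem_eb i) (by abel)
  have h10 : c (-eb i) = c (eb j) ∨ c (-eb i) = c (-eb i - eb j) :=
    step c key (mem_eb j) (mem_mm hij) (mem_neg_eb i) (by abel)
  have h11 : c (eb i) = c (-eb j) ∨ c (eb i) = c (eb i + eb j) :=
    step c key (mem_neg_eb j) (mem_pp hij) (mem_eb i) (by abel)
  have h12 : c (-eb i) = c (-eb j) ∨ c (-eb i) = c (-eb i + eb j) :=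
    step c key (mem_neg_eb j) (mem_mp hij) (mem_neg_eb i) (by abel)
  exact abstractB2 h1 h2 h3 h4 h5 h6 h7 h8 h9 h10 h11 h12

/-- Any such coloring of the roots of `B_n` uses at most 2 colors. -/
lemma two_colors (key : ∀ a ∈ rootsB n, ∀ b ∈ rootsB n,
      a + b ∈ rootsB n → c (a + b) = c a ∨ c (a + b) = c b)
    (hn : 2 ≤ n) :
    ∃ a b : Fin m, ∀ v ∈ rootsB n, c v = a ∨ c v = b := by
  by_cases hEx : ∃ i : Fin n, c (eb i) ≠ c (-eb i)
  · obtain ⟨i, hi⟩ := hEx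
    refine ⟨c (eb i), c (-eb i), ?_⟩
    have short_in : ∀ k : Fin n,
        (c (eb k) = c (eb i) ∨ c (eb k) = c (-eb i)) ∧
        (c (-eb k) = c (eb i) ∨ c (-eb k) = c (-eb i)) := by
      intro k
      by_cases hk : k = i
      · subst hk; exact ⟨Or.inl rfl, Or.inr rfl⟩
      · exact (pair_facts c key (Ne.symm hk)).1 hi
    intro v hv
    rcases hv with ⟨k, hk | hk⟩ | ⟨k, l, hkl, h | h | h | h⟩
    · subst hk; exact (short_in k).1
    · subst hk; exact (short_in k).2
    · subst h
      rcases step c key (mem_eb k) (mem_eb l) (mem_pp hkl.ne) rfl with h' | h'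
      · exact h' ▸ (short_in k).1
      · exact h' ▸ (short_in l).1
    · subst h
      rcases step c key (mem_eb k) (mem_neg_eb l) (mem_pm hkl.ne) (by abel) with h' | h'
      · exact h' ▸ (short_in k).1
      · exact h' ▸ (short_in l).2
    · subst h
      rcases step c key (mem_neg_eb k) (mem_eb l) (mem_mp hkl.ne) rfl with h' | h'
      · exact h' ▸ (short_in k).2
      · exact h' ▸ (short_in l).1
    · subst h
      rcases step c key (mem_neg_eb k) (mem_neg_eb l) (mem_mm hkl.ne) (by abel) with h' | h'
      · exact h' ▸ (short_in k).2
      · exact h' ▸ (short_in l).2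
  · push_neg at hEx
    have h01 : (⟨0, by omega⟩ : Fin n) ≠ ⟨1, by omega⟩ := by simp
    set i0 : Fin n := ⟨0, by omega⟩ with hi0
    refine ⟨c (eb i0), c (eb i0), ?_⟩
    have short_a : ∀ k : Fin n, c (eb k) = c (eb i0) := by
      intro k
      by_cases hk : k = i0
      · subst hk; rfl
      · exact ((pair_facts c key (Ne.symm hk)).2 (hEx i0) (hEx k)).symm
    have short_a' : ∀ k : Fin n, c (-eb k) = c (eb i0) := by
      intro k; rw [← hEx k]; exact short_a k
    intro v hv
    rcases hv with ⟨k, hk | hk⟩ | ⟨k, l, hkl, h | h | h | h⟩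
    · subst hk; exact Or.inl (short_a k)
    · subst hk; exact Or.inl (short_a' k)
    · subst h
      rcases step c key (mem_eb k) (mem_eb l) (mem_pp hkl.ne) rfl with h' | h'
      · exact Or.inl (h'.trans (short_a k))
      · exact Or.inl (h'.trans (short_a l))
    · subst h
      rcases step c key (mem_eb k) (mem_neg_eb l) (mem_pm hkl.ne) (by abel) with h' | h'
      · exact Or.inl (h'.trans (short_a k))
      · exact Or.inl (h'.trans (short_a' l))
    · subst h
      rcases step c key (mem_neg_eb k) (mem_eb l) (mem_mp hkl.ne) rfl with h' | h'
      · exact Or.inl (h'.trans (short_a' k))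
      · exact Or.inl (h'.trans (short_a l))
    · subst h
      rcases step c key (mem_neg_eb k) (mem_neg_eb l) (mem_mm hkl.ne) (by abel) with h' | h'
      · exact Or.inl (h'.trans (short_a' k))
      · exact Or.inl (h'.trans (short_a' l))

end Aux

theorem stmt5 (n : ℕ) (hn : 2 ≤ n) (m : ℕ) (hm : 3 ≤ m) :
    ¬ ∃ P : Fin m → Set (Fin n → ℤ),
      (⋃ i, P i) = rootsB n ∧
      (∀ i, (P i).Nonempty) ∧
      (Pairwise fun i j => Disjoint (P i) (P j)) ∧
      (∀ i, RootClosed (rootsB n) (P i)) ∧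
      (∀ i j, i ≠ j → RootClosed (rootsB n) (P i ∪ P j)) := by
  rintro ⟨P, hU, hNe, hDis, hCl, hCl2⟩
  classical
  set c : (Fin n → ℤ) → Fin m :=
    fun v => if h : ∃ i, v ∈ P i then h.choose else ⟨0, by omega⟩ with hc
  have hcP : ∀ v, (∃ i, v ∈ P i) → v ∈ P (c v) := by
    intro v h
    simp only [hc, dif_pos h]
    exact h.choose_spec
  have hcu : ∀ v (i : Fin m), v ∈ P i → c v = i := by
    intro v i hv
    have h : ∃ j, v ∈ P j := ⟨i, hv⟩
    by_contra hne
    exact Set.disjoint_left.mp (hDis hne) (hcP v h) hv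
  have hmem : ∀ v ∈ rootsB n, ∃ i, v ∈ P i := by
    intro v hv
    rw [← hU] at hv
    exact Set.mem_iUnion.mp hv
  have key : ∀ a ∈ rootsB n, ∀ b ∈ rootsB n,
      a + b ∈ rootsB n → c (a + b) = c a ∨ c (a + b) = c b := by
    intro a ha b hb hs
    have haP : a ∈ P (c a) := hcP a (hmem a ha)
    have hbP : b ∈ P (c b) := hcP b (hmem b hb)
    by_cases h : c a = c b
    · left
      exact hcu _ _ (hCl (c a) a haP b (h ▸ hbP) hs)
    · have := hCl2 (c a) (c b) h a (Or.inl haP) b (Or.inr hbP) hs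
      rcases this with h' | h'
      · exact Or.inl (hcu _ _ h')
      · exact Or.inr (hcu _ _ h')
  obtain ⟨a, b, hab⟩ := two_colors c key hn
  have f : ∀ t : Fin m, (∃ v, v ∈ P t) → t = a ∨ t = b := by
    rintro t ⟨v, hv⟩
    have hvr : v ∈ rootsB n := by
      rw [← hU]; exact Set.mem_iUnion.mpr ⟨t, hv⟩
    have := hab v hvr
    rw [hcu v t hv] at this
    exact this
  have h0 := f ⟨0, by omega⟩ (hNe _)
  have h1 := f ⟨1, by omega⟩ (hNe _)
  have h2 := f ⟨2, by omega⟩ (hNe _)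
  have h0' : 0 = a.val ∨ 0 = b.val := h0.imp (congrArg Fin.val) (congrArg Fin.val)
  have h1' : 1 = a.val ∨ 1 = b.val := h1.imp (congrArg Fin.val) (congrArg Fin.val)
  have h2' : 2 = a.val ∨ 2 = b.val := h2.imp (congrArg Fin.val) (congrArg Fin.val)
  rcases h0' with h0' | h0' <;> rcases h1' with h1' | h1' <;>
    rcases h2' with h2' | h2' <;> omega
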